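/- Let A be a maximal monotone operator on a real Hilbert space H with F = A⁻¹(0) nonempty. Suppose β_n > 0 with β_n → ∞, α_n ∈ ℝ with α_n → 0, e_n ∈ H with α_n·e_n → 0, and u_n → u in H. Then for every starting point x₀ ∈ H, the sequence defined by x_{n+1} = (I + β_n A)⁻¹(u_n + α_n(x_n + e_n)) converges strongly to P_F u. -/

import Mathlib

open scoped RealInnerProductSpace
open Filter

variable {H : Type*} [NormedAddCommGroup H] [InnerProductSpace ℝ H] [CompleteSpace H]

/-- A (possibly set-valued) operator `A : H → Set H` is monotone. -/
def IsMonotoneOp (A : H → Set H) : Prop :=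
  ∀ x₁ y₁ x₂ y₂, y₁ ∈ A x₁ → y₂ ∈ A x₂ → 0 ≤ ⟪x₁ - x₂, y₁ - y₂⟫

/-- `A` is maximal monotone: it is monotone and any pair `[x, y]` monotonically
related to the whole graph of `A` already belongs to the graph of `A`. -/
def IsMaximalMonotone (A : H → Set H) : Prop :=
  IsMonotoneOp A ∧ ∀ x y, (∀ v w, w ∈ A v → 0 ≤ ⟪v - x, w - y⟫) → y ∈ A x

/-- `J` is the resolvent `(I + βA)⁻¹` of `A`: for every `y`, `J y` satisfies
`(y - J y)/β ∈ A (J y)`, i.e. `y ∈ (I + βA)(J y)`. -/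
def IsResolvent (A : H → Set H) (β : ℝ) (J : H → H) : Prop :=
  ∀ y, β⁻¹ • (y - J y) ∈ A (J y)

/-- `p` is the metric projection of `u` onto the set `F`. -/
def IsProjection (F : Set H) (u p : H) : Prop :=
  p ∈ F ∧ ∀ q ∈ F, ‖u - p‖ ≤ ‖u - q‖

/-- Auxiliary algebraic certificate used in the resolvent Cauchy estimate. -/
theorem keyalg_aux (na nb s bm bn : ℝ)
    (hbm : 0 < bm) (hbn : 0 < bn) (hmn : bm ≤ bn)
    (hCS : s^2 ≤ na^2*nb^2)
    (h1 : 0 ≤ bm⁻¹*s - bn⁻¹*na^2 - bm⁻¹*nb^2 + bn⁻¹*s) :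
    nb^2 ≤ s := by
  have e : bm*bn*(bm⁻¹*s - bn⁻¹*na^2 - bm⁻¹*nb^2 + bn⁻¹*s)
      = bn*s - bm*na^2 - bn*nb^2 + bm*s := by
    field_simp
  have h2 : 0 ≤ bn*s - bm*na^2 - bn*nb^2 + bm*s := by
    rw [← e]; exact mul_nonneg (mul_pos hbm hbn).le h1
  by_contra hc
  push_neg at hc
  have c1 : 0 < nb^2 - s := by linarith
  have c2 : 0 < bn*nb^2 - bm*s := by nlinarith
  have c3 : 0 < (nb^2 - s)*(bn*nb^2 - bm*s) := mul_pos c1 c2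
  nlinarith [mul_nonneg h2 (sq_nonneg nb), mul_le_mul_of_nonneg_left hCS hbm.le]

/-- Inner-product expansion used in the Cauchy estimate. -/
theorem inner_expand_aux {H : Type*} [NormedAddCommGroup H] [InnerProductSpace ℝ H]
    (a b : H) (cm cn : ℝ) :
    ⟪a - b, cm • b - cn • a⟫ = cm*⟪a,b⟫ - cn*‖a‖^2 - cm*‖b‖^2 + cn*⟪a,b⟫ := by
  rw [inner_sub_right, real_inner_smul_right, real_inner_smul_right,
    inner_sub_left, inner_sub_left, real_inner_self_eq_norm_sq,
    real_inner_self_eq_norm_sq, real_inner_comm b a]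
  ring

set_option maxHeartbeats 1000000 in
/-- Main theorem: under hypotheses (H), the sequence generated by
`x_{n+1} = (I + β_n A)⁻¹ (u_n + α_n (x_n + e_n))` converges strongly to `P_F u`. -/
theorem stmt_1 (A : H → Set H) (hA : IsMaximalMonotone A)
    (F : Set H) (hF : F = {x | (0 : H) ∈ A x}) (hne : F.Nonempty)
    (β : ℕ → ℝ) (hβpos : ∀ n, 0 < β n) (hβ : Tendsto β atTop atTop)
    (α : ℕ → ℝ) (hα : Tendsto α atTop (nhds 0))
    (e : ℕ → H) (hαe : Tendsto (fun n => α n • e n) atTop (nhds 0))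
    (useq : ℕ → H) (u : H) (hu : Tendsto useq atTop (nhds u))
    (J : ℕ → H → H) (hJ : ∀ n, IsResolvent A (β n) (J n))
    (x : ℕ → H) (hx : ∀ n, x (n + 1) = J n (useq n + α n • (x n + e n)))
    (p : H) (hp : IsProjection F u p) :
    Tendsto x atTop (nhds p) := by
  obtain ⟨hmono, hmax⟩ := hA
  have hpA : (0:H) ∈ A p := by have := hp.1; rw [hF] at this; exact this
  -- key resolvent inequality against zeros of A
  have hres : ∀ n (y q : H), (0:H) ∈ A q → 0 ≤ ⟪J n y - q, y - J n y⟫ := by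
    intro n y q hq
    have h := hmono (J n y) _ q 0 (hJ n y) hq
    rw [sub_zero, real_inner_smul_right] at h
    nlinarith [inv_pos.2 (hβpos n), h]
  -- Fejér property of resolvents
  have fejer : ∀ n (y q : H), (0:H) ∈ A q → ‖J n y - q‖ ≤ ‖y - q‖ := by
    intro n y q hq
    have h := hres n y q hq
    have hsplit : ⟪J n y - q, y - q⟫ = ⟪J n y - q, y - J n y⟫ + ‖J n y - q‖^2 := by
      rw [← real_inner_self_eq_norm_sq, ← inner_add_right]
      congr 1; abel
    have h3 := real_inner_le_norm (J n y - q) (y - q)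
    nlinarith [norm_nonneg (J n y - q), norm_nonneg (y - q)]
  -- resolvents are nonexpansive
  have nonexp : ∀ n (y y' : H), ‖J n y - J n y'‖ ≤ ‖y - y'‖ := by
    intro n y y'
    have h := hmono (J n y) _ (J n y') _ (hJ n y) (hJ n y')
    rw [← smul_sub, real_inner_smul_right] at h
    have h0 : 0 ≤ ⟪J n y - J n y', (y - J n y) - (y' - J n y')⟫ := by
      nlinarith [inv_pos.2 (hβpos n), h]
    have hsplit : ⟪J n y - J n y', y - y'⟫
        = ⟪J n y - J n y', (y - J n y) - (y' - J n y')⟫ + ‖J n y - J n y'‖^2 := by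
      rw [← real_inner_self_eq_norm_sq, ← inner_add_right]
      congr 1; abel
    have h3 := real_inner_le_norm (J n y - J n y') (y - y')
    nlinarith [norm_nonneg (J n y - J n y'), norm_nonneg (y - y')]
  obtain ⟨q₀, hq₀⟩ := hne
  have hq₀A : (0:H) ∈ A q₀ := by rw [hF] at hq₀; exact hq₀
  set z : ℕ → H := fun n => J n u with hzdef
  -- uniform bound on u - z n
  have hzb : ∀ n, ‖u - z n‖ ≤ 2*‖u - q₀‖ := by
    intro n
    have h1 : ‖u - z n‖ ≤ ‖u - q₀‖ + ‖z n - q₀‖ := by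
      have : u - z n = (u - q₀) - (z n - q₀) := by abel
      rw [this]; exact norm_sub_le _ _
    have h2 := fejer n u q₀ hq₀A
    simp only [hzdef] at *
    linarith
  -- key Cauchy estimate
  have hck : ∀ m n, β m ≤ β n → ‖z m - z n‖^2 ≤ ‖u - z n‖^2 - ‖u - z m‖^2 := by
    intro m n hmn
    have h := hmono (z m) _ (z n) _ (hJ m u) (hJ n u)
    have hab : z m - z n = (u - z n) - (u - z m) := by abel
    rw [hab, inner_expand_aux (u - z n) (u - z m) (β m)⁻¹ (β n)⁻¹] at h
    have hCS : ⟪u - z n, u - z m⟫^2 ≤ ‖u - z n‖^2*‖u - z m‖^2 := by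
      have h' := real_inner_mul_inner_self_le (u - z n) (u - z m)
      rw [real_inner_self_eq_norm_sq, real_inner_self_eq_norm_sq] at h'
      nlinarith [h']
    have hkey := keyalg_aux ‖u - z n‖ ‖u - z m‖ ⟪u - z n, u - z m⟫ (β m) (β n)
      (hβpos m) (hβpos n) hmn hCS h
    rw [hab, norm_sub_sq_real]
    linarith
  -- z is Cauchy
  have hBdd : BddAbove (Set.range fun n => ‖u - z n‖^2) := by
    refine ⟨(2*‖u - q₀‖)^2, ?_⟩
    rintro _ ⟨n, rfl⟩
    show ‖u - z n‖^2 ≤ (2*‖u - q₀‖)^2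
    nlinarith [norm_nonneg (u - z n), norm_nonneg (u - q₀), hzb n]
  set L := sSup (Set.range fun n => ‖u - z n‖^2) with hL
  have hLub : ∀ n, ‖u - z n‖^2 ≤ L := fun n => le_csSup hBdd ⟨n, rfl⟩
  have hzc : CauchySeq z := by
    rw [Metric.cauchySeq_iff']
    intro ε hε
    have hδ : L - (ε/3)^2 < L := by
      have : 0 < (ε/3)^2 := by positivity
      linarith
    obtain ⟨_, ⟨k, rfl⟩, hk⟩ := exists_lt_of_lt_csSup (Set.range_nonempty _) hδ
    obtain ⟨N, hN⟩ := eventually_atTop.1 (hβ.eventually_ge_atTop (β k))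
    refine ⟨N, fun n hn => ?_⟩
    have est : ∀ j, N ≤ j → ‖z k - z j‖ ≤ ε/3 := by
      intro j hj
      have h := hck k j (hN j hj)
      have h2 : ‖z k - z j‖^2 ≤ (ε/3)^2 := by
        have := hLub j; linarith
      nlinarith [norm_nonneg (z k - z j), hε]
    have d1 := est n hn
    have d2 := est N le_rfl
    have tri : ‖z n - z N‖ ≤ ‖z k - z n‖ + ‖z k - z N‖ := by
      have : z n - z N = -(z k - z n) + (z k - z N) := by abel
      rw [this]
      exact le_trans (norm_add_le _ _) (by rw [norm_neg])
    rw [dist_eq_norm]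
    linarith
  obtain ⟨zs, hzs⟩ := cauchySeq_tendsto_of_complete hzc
  -- the residuals tend to 0
  have hv : Tendsto (fun n => (β n)⁻¹ • (u - z n)) atTop (nhds 0) := by
    have hg : Tendsto (fun n => (β n)⁻¹ * (2*‖u - q₀‖)) atTop (nhds 0) := by
      have := hβ.inv_tendsto_atTop.mul_const (2*‖u - q₀‖)
      simpa only [zero_mul, Pi.inv_apply] using this
    refine squeeze_zero_norm (fun n => ?_) hg
    rw [norm_smul, Real.norm_eq_abs, abs_of_pos (inv_pos.2 (hβpos n))]
    exact mul_le_mul_of_nonneg_left (hzb n) (inv_pos.2 (hβpos n)).le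
  -- limit zs is a zero of A
  have hzsA : (0:H) ∈ A zs := by
    refine hmax zs 0 (fun v w hw => ?_)
    have hseq : ∀ n, 0 ≤ ⟪v - z n, w - (β n)⁻¹ • (u - z n)⟫ :=
      fun n => hmono v w (z n) _ hw (hJ n u)
    have hlim : Tendsto (fun n => ⟪v - z n, w - (β n)⁻¹ • (u - z n)⟫) atTop
        (nhds ⟪v - zs, w - 0⟫) :=
      (tendsto_const_nhds.sub hzs).inner (tendsto_const_nhds.sub hv)
    exact ge_of_tendsto' hlim hseq
  -- zs minimizes distance to u among zeros of A
  have hzsmin : ∀ q, (0:H) ∈ A q → ‖u - zs‖ ≤ ‖u - q‖ := by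
    intro q hq
    have hlim : Tendsto (fun n => ⟪z n - q, u - z n⟫) atTop (nhds ⟪zs - q, u - zs⟫) :=
      (hzs.sub tendsto_const_nhds).inner (tendsto_const_nhds.sub hzs)
    have h0 : 0 ≤ ⟪zs - q, u - zs⟫ := ge_of_tendsto' hlim (fun n => hres n u q hq)
    have hsplit : ⟪u - zs, u - q⟫ = ‖u - zs‖^2 + ⟪zs - q, u - zs⟫ := by
      have : u - q = (u - zs) + (zs - q) := by abel
      rw [this, inner_add_right, ← real_inner_self_eq_norm_sq, real_inner_comm (u - zs) (zs - q)]
    have hcs := real_inner_le_norm (u - zs) (u - q)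
    nlinarith [norm_nonneg (u - zs), norm_nonneg (u - q)]
  -- midpoint of zs and p is a zero of A (convexity of F)
  set m := (1/2:ℝ) • (zs + p) with hm
  have hmA : (0:H) ∈ A m := by
    refine hmax m 0 (fun v w hw => ?_)
    have h1 := hmono v w zs 0 hw hzsA
    have h2 := hmono v w p 0 hw hpA
    have ev : v - m = (1/2:ℝ) • ((v - zs) + (v - p)) := by rw [hm]; module
    rw [ev, real_inner_smul_left, inner_add_left]
    linarith
  -- zs = p
  have hzsp : zs = p := by
    have h1 : ‖u - zs‖ ≤ ‖u - p‖ := hzsmin p hpA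
    have h2 : ‖u - p‖ ≤ ‖u - zs‖ := hp.2 zs (by rw [hF]; exact hzsA)
    have h3 : ‖u - p‖ ≤ ‖u - m‖ := hp.2 m (by rw [hF]; exact hmA)
    have ev : u - m = (1/2:ℝ) • ((u - zs) + (u - p)) := by rw [hm]; module
    have e2 : ‖u - m‖^2 = (1/2)^2 * ‖(u - zs) + (u - p)‖^2 := by
      rw [ev, norm_smul, mul_pow, Real.norm_eq_abs]
      norm_num
    have e3 : ‖(u - zs) + (u - p)‖^2 = ‖u - zs‖^2 + 2*⟪u - zs, u - p⟫ + ‖u - p‖^2 :=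
      norm_add_sq_real _ _
    have e4 : ‖zs - p‖^2 = ‖u - p‖^2 - 2*⟪u - p, u - zs⟫ + ‖u - zs‖^2 := by
      have : zs - p = (u - p) - (u - zs) := by abel
      rw [this, norm_sub_sq_real]
    have hcomm : ⟪u - p, u - zs⟫ = ⟪u - zs, u - p⟫ := real_inner_comm _ _
    have hsq : ‖zs - p‖^2 ≤ 0 := by
      nlinarith [norm_nonneg (u - m), norm_nonneg (u - p)]
    have : ‖zs - p‖ = 0 := le_antisymm (by nlinarith [norm_nonneg (zs - p)]) (norm_nonneg _)
    rw [norm_eq_zero, sub_eq_zero] at this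
    exact this
  rw [hzsp] at hzs
  -- boundedness of x
  have h1 : ∀ᶠ n in atTop, |α n| < 1/2 := by
    have := Metric.tendsto_nhds.mp hα (1/2) (by norm_num)
    simpa only [Real.dist_eq, sub_zero] using this
  have h2 : ∀ᶠ n in atTop, ‖useq n - p‖ < ‖u - p‖ + 1 := by
    have hnu : Tendsto (fun n => ‖useq n - p‖) atTop (nhds ‖u - p‖) :=
      (hu.sub tendsto_const_nhds).norm
    exact hnu.eventually_lt_const (lt_add_one _)
  have h3 : ∀ᶠ n in atTop, ‖α n • e n‖ < 1 := by
    have hne : Tendsto (fun n => ‖α n • e n‖) atTop (nhds ‖(0:H)‖) := hαe.norm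
    simp only [norm_zero] at hne
    exact hne.eventually_lt_const one_pos
  obtain ⟨N, hN⟩ := eventually_atTop.1 ((h1.and h2).and h3)
  obtain ⟨C, hC⟩ : ∃ C, C = ‖u - p‖ + 1 + 1 + (1/2)*‖p‖ := ⟨_, rfl⟩
  obtain ⟨B, hB⟩ : ∃ B, B = max ‖x N - p‖ (2*C) := ⟨_, rfl⟩
  have hCpos : 0 < C := by
    rw [hC]; positivity
  have hBnn : 0 ≤ B := by
    rw [hB]; exact le_trans (norm_nonneg _) (le_max_left _ _)
  have hxb : ∀ k, ‖x (N + k) - p‖ ≤ B := by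
    intro k
    induction k with
    | zero =>
      rw [Nat.add_zero, hB]
      exact le_max_left _ _
    | succ k ih =>
      obtain ⟨⟨hα', hu'⟩, he'⟩ := hN (N + k) (Nat.le_add_right _ _)
      have hyp : ‖useq (N+k) + α (N+k) • (x (N+k) + e (N+k)) - p‖ ≤ C + (1/2)*B := by
        have edec : useq (N+k) + α (N+k) • (x (N+k) + e (N+k)) - p
            = (useq (N+k) - p) + (α (N+k) • (x (N+k) - p)
              + (α (N+k) • p + α (N+k) • e (N+k))) := by module
        rw [edec]
        have t1 : ‖α (N+k) • (x (N+k) - p)‖ ≤ (1/2)*B := by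
          rw [norm_smul, Real.norm_eq_abs]
          exact mul_le_mul hα'.le ih (norm_nonneg _) (by norm_num)
        have t2 : ‖α (N+k) • p‖ ≤ (1/2)*‖p‖ := by
          rw [norm_smul, Real.norm_eq_abs]
          exact mul_le_mul_of_nonneg_right hα'.le (norm_nonneg _)
        have n1 := norm_add_le (useq (N+k) - p)
          (α (N+k) • (x (N+k) - p) + (α (N+k) • p + α (N+k) • e (N+k)))
        have n2 := norm_add_le (α (N+k) • (x (N+k) - p)) (α (N+k) • p + α (N+k) • e (N+k))
        have n3 := norm_add_le (α (N+k) • p) (α (N+k) • e (N+k))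
        linarith [hu'.le, he'.le, hC]
      have hx' : x (N + (k+1)) = J (N+k) (useq (N+k) + α (N+k) • (x (N+k) + e (N+k))) := by
        rw [show N + (k+1) = (N+k) + 1 by ring]; exact hx (N+k)
      have : ‖x (N + (k+1)) - p‖ ≤ C + (1/2)*B := by
        rw [hx']
        exact le_trans (fejer _ _ p hpA) hyp
      have hCB : C ≤ (1/2)*B := by
        have h2CB : 2*C ≤ B := by rw [hB]; exact le_max_right _ _
        linarith
      linarith
  have hxbound : ∀ᶠ n in atTop, ‖x n - p‖ ≤ B := by
    rw [eventually_atTop]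
    exact ⟨N, fun n hn => by have := hxb (n - N); rwa [Nat.add_sub_cancel' hn] at this⟩
  -- α n • x n → 0
  have hαx : Tendsto (fun n => α n • x n) atTop (nhds 0) := by
    have hg : Tendsto (fun n => |α n| * (B + ‖p‖)) atTop (nhds 0) := by
      have := (hα.abs).mul_const (B + ‖p‖)
      simpa only [abs_zero, zero_mul] using this
    refine squeeze_zero_norm' ?_ hg
    filter_upwards [hxbound] with n hn
    rw [norm_smul, Real.norm_eq_abs]
    have hxn : ‖x n‖ ≤ B + ‖p‖ := by
      have e1 : x n = (x n - p) + p := by abel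
      calc ‖x n‖ = ‖(x n - p) + p‖ := by rw [← e1]
        _ ≤ ‖x n - p‖ + ‖p‖ := norm_add_le _ _
        _ ≤ B + ‖p‖ := by linarith
    exact mul_le_mul_of_nonneg_left hxn (abs_nonneg _)
  -- the arguments of the resolvents tend to u
  have hy : Tendsto (fun n => useq n + α n • (x n + e n)) atTop (nhds u) := by
    have ee : (fun n => useq n + α n • (x n + e n))
        = fun n => useq n + (α n • x n + α n • e n) := by
      funext n; rw [smul_add]
    rw [ee]
    have h0 := hu.add (hαx.add hαe)
    simpa only [add_zero] using h0
  -- conclude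
  have hd : Tendsto (fun n => x (n+1) - z n) atTop (nhds 0) := by
    have hg : Tendsto (fun n => ‖(useq n + α n • (x n + e n)) - u‖) atTop (nhds 0) := by
      have h' : Tendsto (fun n => (useq n + α n • (x n + e n)) - u) atTop (nhds (u - u)) :=
        hy.sub tendsto_const_nhds
      simpa only [sub_self, norm_zero] using h'.norm
    refine squeeze_zero_norm (fun n => ?_) hg
    rw [hx n]
    exact nonexp n _ u
  have hfin : Tendsto (fun n => x (n+1)) atTop (nhds p) := by
    have h0 := hd.add hzs
    simpa only [sub_add_cancel, zero_add] using h0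
  exact (tendsto_add_atTop_iff_nat 1).mp hfin
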